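/- For every positive integer m, the quantity A_m = 1/2 - (2m)!⁴/(4·(4m)!·m!⁴) satisfies 1/3 ≤ A_m < 1/2, and A_m → 1/2 as m → ∞. -/

import Mathlib

/-- The closed-form value `A_m = 1/2 - (2m)!⁴/(4·(4m)!·m!⁴)` of `∫₀¹ I(m,m;t)² dt`. -/
noncomputable def Aclosed (m : ℕ) : ℝ :=
  1/2 - ((2*m).factorial : ℝ)^4 / (4 * ((4*m).factorial : ℝ) * ((m.factorial : ℝ))^4)


noncomputable def cc (m : ℕ) : ℝ :=
  ((2*m).factorial : ℝ)^4 / (4 * ((4*m).factorial : ℝ) * ((m.factorial : ℝ))^4)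

lemma cc_pos (m : ℕ) : 0 < cc m := by
  have h1 := (2*m).factorial_pos
  have h2 := (4*m).factorial_pos
  have h3 := m.factorial_pos
  unfold cc
  positivity

lemma cc_one : cc 1 = 1/6 := by norm_num [cc, Nat.factorial]

lemma cc_succ (m : ℕ) :
    cc (m+1) = cc m * (4*(2*(m:ℝ)+1)^3) / ((2*m+2)*(4*m+1)*(4*m+3)) := by
  have h2 : (2*(m+1)).factorial = (2*m+2)*((2*m+1)*(2*m).factorial) := by
    rw [show 2*(m+1) = (2*m+1)+1 by ring, Nat.factorial_succ, Nat.factorial_succ]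
  have h4 : (4*(m+1)).factorial
      = (4*m+4)*((4*m+3)*((4*m+2)*((4*m+1)*(4*m).factorial))) := by
    rw [show 4*(m+1) = (4*m+3)+1 by ring, Nat.factorial_succ,
      show 4*m+3 = (4*m+2)+1 by ring, Nat.factorial_succ,
      show 4*m+2 = (4*m+1)+1 by ring, Nat.factorial_succ, Nat.factorial_succ]
  have h1 : (m+1).factorial = (m+1)*m.factorial := Nat.factorial_succ m
  have p2 : ((2*m).factorial : ℝ) ≠ 0 := by positivity
  have p4 : ((4*m).factorial : ℝ) ≠ 0 := by positivity
  have p1 : ((m).factorial : ℝ) ≠ 0 := by positivity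
  have q1 : (2*(m:ℝ)+2) ≠ 0 := by positivity
  have q2 : (4*(m:ℝ)+1) ≠ 0 := by positivity
  have q3 : (4*(m:ℝ)+3) ≠ 0 := by positivity
  have q4 : ((m:ℝ)+1) ≠ 0 := by positivity
  unfold cc
  rw [h2, h4, h1]
  push_cast
  field_simp
  ring

lemma cc_succ_le (m : ℕ) : cc (m+1) ≤ cc m := by
  rw [cc_succ]
  have hc := (cc_pos m).le
  rw [div_le_iff₀ (by positivity)]
  have key : 4*(2*(m:ℝ)+1)^3 ≤ (2*m+2)*(4*m+1)*(4*m+3) := by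
    nlinarith [sq_nonneg ((m:ℝ)), Nat.cast_nonneg (α := ℝ) m]
  calc cc m * (4*(2*(m:ℝ)+1)^3) ≤ cc m * ((2*m+2)*(4*m+1)*(4*m+3)) := by
        exact mul_le_mul_of_nonneg_left key hc
    _ = cc m * ((2*m+2)*(4*m+1)*(4*m+3)) := rfl

lemma cc_sq_decay (m : ℕ) (hm : 1 ≤ m) :
    (2*(m:ℝ)+3) * cc (m+1)^2 ≤ (2*m+1) * cc m ^2 := by
  rw [cc_succ]
  have hc := sq_nonneg (cc m)
  have hm' : (1:ℝ) ≤ (m:ℝ) := by exact_mod_cast hm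
  rw [div_pow, mul_pow, ← mul_div_assoc, div_le_iff₀ (by positivity)]
  have key : (2*(m:ℝ)+3) * (4*(2*(m:ℝ)+1)^3)^2 ≤ (2*m+1) * ((2*m+2)*(4*m+1)*(4*m+3))^2 := by
    nlinarith [sq_nonneg ((m:ℝ)), sq_nonneg ((m:ℝ)-1), pow_pos (by positivity : (0:ℝ) < (m:ℝ)) 3]
  calc (2*(m:ℝ)+3) * (cc m ^2 * (4*(2*(m:ℝ)+1)^3)^2)
      = cc m ^2 * ((2*(m:ℝ)+3) * (4*(2*(m:ℝ)+1)^3)^2) := by ring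
    _ ≤ cc m ^2 * ((2*m+1) * ((2*m+2)*(4*m+1)*(4*m+3))^2) := mul_le_mul_of_nonneg_left key hc
    _ = (2*m+1) * cc m ^2 * ((2*m+2)*(4*m+1)*(4*m+3))^2 := by ring

lemma cc_le_one_sixth (m : ℕ) (hm : 1 ≤ m) : cc m ≤ 1/6 := by
  induction m, hm using Nat.le_induction with
  | base => rw [cc_one]
  | succ n hn ih => exact le_trans (cc_succ_le n) ih

lemma cc_sq_le (m : ℕ) (hm : 1 ≤ m) : (2*(m:ℝ)+1) * cc m ^2 ≤ 1/12 := by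
  induction m, hm using Nat.le_induction with
  | base => rw [cc_one]; norm_num
  | succ n hn ih =>
      have := cc_sq_decay n hn
      push_cast
      push_cast at this ih
      linarith

lemma cc_tendsto : Filter.Tendsto cc Filter.atTop (nhds 0) := by
  have hsq : Filter.Tendsto (fun m => cc m ^ 2) Filter.atTop (nhds 0) := by
    refine squeeze_zero_norm' (a := fun m : ℕ => 1 / (m:ℝ)) ?_ ?_
    · filter_upwards [Filter.eventually_ge_atTop 1] with m hm
      have h1 := cc_sq_le m hm
      have hm' : (1:ℝ) ≤ (m:ℝ) := by exact_mod_cast hm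
      have h2 : (0:ℝ) ≤ cc m ^2 := sq_nonneg _
      rw [Real.norm_eq_abs, abs_of_nonneg h2]
      rw [le_div_iff₀ (by linarith)]
      nlinarith
    · exact tendsto_one_div_atTop_nhds_zero_nat
  have h0 : Filter.Tendsto (fun m => Real.sqrt (cc m ^ 2)) Filter.atTop (nhds 0) := by
    have := (Real.continuous_sqrt.tendsto 0).comp hsq
    simpa [Function.comp_def] using this
  refine h0.congr (fun m => ?_)
  exact Real.sqrt_sq (cc_pos m).le


lemma Aclosed_eq (m : ℕ) : Aclosed m = 1/2 - cc m := rfl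

theorem Aclosed_bounds_and_limit :
    (∀ m : ℕ, 1 ≤ m → 1/3 ≤ Aclosed m ∧ Aclosed m < 1/2) ∧
    Filter.Tendsto Aclosed Filter.atTop (nhds (1/2)) := by
  constructor
  · intro m hm
    rw [Aclosed_eq]
    have h1 := cc_le_one_sixth m hm
    have h2 := cc_pos m
    constructor <;> linarith
  · have : Filter.Tendsto (fun m => 1/2 - cc m) Filter.atTop (nhds (1/2:ℝ)) := by
      simpa using (cc_tendsto.const_sub (1/2:ℝ))
    exact this.congr (fun m => (Aclosed_eq m).symm)
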